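/- (Litherland–Nelson) Let Q be a quandle and A a commutative ring. Let • denote the A-bilinear concatenation product on rack chains, (x₁,…,xₙ) • (y₁,…,y_m) = (x₁,…,xₙ,y₁,…,y_m), and define α_n : C^R_n(Q;A) → C^R_n(Q;A) on basis elements by α_n(x₁, x₂, …, xₙ) = (x₁) • ((x₂) − (x₁)) • ((x₃) − (x₂)) • ⋯ • ((xₙ) − (x_{n−1})). Then: (i) ∂_n ∘ α_n = α_{n−1} ∘ ∂_n for all n ≥ 2 (with α₀ the identity of C^R_0), so α_* is a chain map; and (ii) for every n ≥ 1, C^R_n(Q;A) is the internal direct sum of the submodules C^D_n(Q;A) and α_n(C^R_n(Q;A)); consequently C^Q_n(Q;A) is isomorphic to α_n(C^R_n(Q;A)). -/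

import Mathlib

/-- A rack in the convention of the paper: two binary operations `◁` (`tri`) and
`◀` (`triInv`) that are mutually inverse on the right and right self-distributive. -/
class PaperRack (α : Type*) where
  tri : α → α → α
  triInv : α → α → α
  triInv_tri : ∀ a b, triInv (tri a b) b = a
  tri_triInv : ∀ a b, tri (triInv a b) b = a
  tri_tri : ∀ a b c, tri (tri a b) c = tri (tri a c) (tri b c)

/-- A quandle: a rack whose operations are idempotent. -/
class PaperQuandle (α : Type*) extends PaperRack α where
  tri_self : ∀ a, tri a a = a
  triInv_self : ∀ a, triInv a a = a

open PaperRack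

/-- The rack chain module `C^R_n(R; A)`: the free `A`-module on `n`-tuples of
elements of `R` (for `n = 0` this is free on the unique empty tuple, i.e. `A`). -/
abbrev RackChains (R A : Type*) [CommRing A] (n : ℕ) : Type _ := (Fin n → R) →₀ A

/-- The `i`-th "acted" face of a tuple: delete the `i`-th entry and act by it on all
earlier entries: `(x₁ ◁ x_i, …, x_{i−1} ◁ x_i, x_{i+1}, …, xₙ)`. -/
def dTop {R : Type*} [PaperRack R] {m : ℕ} (i : Fin (m + 1)) (x : Fin (m + 1) → R) :
    Fin m → R :=
  fun j => if ((i.succAbove j : Fin (m + 1)) : ℕ) < (i : ℕ)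
    then tri (x (i.succAbove j)) (x i) else x (i.succAbove j)

/-- The `i`-th "deleted" face of a tuple: `(x₁, …, x_{i−1}, x_{i+1}, …, xₙ)`. -/
def dBot {R : Type*} {m : ℕ} (i : Fin (m + 1)) (x : Fin (m + 1) → R) : Fin m → R :=
  fun j => x (i.succAbove j)

/-- The boundary map `∂_{m+1} : C^R_{m+1}(R;A) → C^R_m(R;A)`; for `m + 1 ≥ 2` it is
`∂_n(x₁,…,xₙ) = Σ_{i=1}^{n} (−1)^{n−i} [(x₁◁x_i,…,x_{i−1}◁x_i,x_{i+1},…,xₙ)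
− (x₁,…,x_{i−1},x_{i+1},…,xₙ)]`, and `∂₁(x) = 1`. -/
noncomputable def rackBoundary (R A : Type*) [PaperRack R] [CommRing A] :
    (m : ℕ) → RackChains R A (m + 1) →ₗ[A] RackChains R A m
  | 0 => Finsupp.lsum A fun _ =>
      LinearMap.toSpanSingleton A _ (Finsupp.single (fun i : Fin 0 => i.elim0) (1 : A))
  | (m + 1) => Finsupp.lsum A fun x => LinearMap.toSpanSingleton A _
      (∑ i : Fin (m + 2), ((-1 : A) ^ (m + 1 - (i : ℕ))) •
        (Finsupp.single (dTop i x) (1 : A) - Finsupp.single (dBot i x) (1 : A)))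

/-- The degenerate chains `C^D_n(Q;A)`: the span of the `n`-tuples having two equal
adjacent entries. -/
noncomputable def Degen (R A : Type*) [CommRing A] (n : ℕ) : Submodule A (RackChains R A n) :=
  Submodule.span A
    { c | ∃ x : Fin n → R,
        (∃ i : ℕ, ∃ h : i + 1 < n, x ⟨i, by omega⟩ = x ⟨i + 1, h⟩) ∧
        c = Finsupp.single x (1 : A) }

/-- The `A`-bilinear concatenation product `C^R_m(R;A) × C^R_1(R;A) → C^R_{m+1}(R;A)`,
`(x₁,…,x_m) • (y) = (x₁,…,x_m,y)`. -/
noncomputable def concatLast (R A : Type*) [CommRing A] (m : ℕ) :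
    RackChains R A m →ₗ[A] RackChains R A 1 →ₗ[A] RackChains R A (m + 1) :=
  Finsupp.lsum A fun x => LinearMap.toSpanSingleton A _
    (Finsupp.lmapDomain A A fun y : Fin 1 → R => Fin.snoc x (y 0))

/-- The Litherland–Nelson chain `α_n(x₁,…,xₙ) = (x₁) • ((x₂) − (x₁)) • ⋯ •
((xₙ) − (x_{n−1}))`. -/
noncomputable def alphaVal (R A : Type*) [CommRing A] :
    (n : ℕ) → (Fin n → R) → RackChains R A n
  | 0, x => Finsupp.single x 1
  | 1, x => Finsupp.single x 1
  | (m + 2), x =>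
      concatLast R A (m + 1) (alphaVal R A (m + 1) fun i => x i.castSucc)
        (Finsupp.single (fun _ : Fin 1 => x (Fin.last (m + 1))) 1 -
          Finsupp.single (fun _ : Fin 1 => x ⟨m, by omega⟩) 1)

/-- The Litherland–Nelson map `α_n : C^R_n(Q;A) → C^R_n(Q;A)`. -/
noncomputable def alphaMap (R A : Type*) [CommRing A] (n : ℕ) :
    RackChains R A n →ₗ[A] RackChains R A n :=
  Finsupp.lsum A fun x => LinearMap.toSpanSingleton A _ (alphaVal R A n x)

namespace LN

variable (Q A : Type*) [PaperQuandle Q] [CommRing A]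

/-- Action of `z` on every coordinate of a chain. -/
noncomputable def actMap (z : Q) (n : ℕ) : RackChains Q A n →ₗ[A] RackChains Q A n :=
  Finsupp.lmapDomain _ A (fun x j => tri (x j) z)

/-- The basis element of `C^R_1` corresponding to `z`. -/
noncomputable def e (z : Q) : RackChains Q A 1 := Finsupp.single (fun _ : Fin 1 => z) 1

/-- `γ(u) = α(u) • (u_last)` extended linearly. -/
noncomputable def gamMap (m : ℕ) : RackChains Q A (m+1) →ₗ[A] RackChains Q A (m+2) :=
  Finsupp.lsum A fun u => LinearMap.toSpanSingleton A _
    (concatLast Q A (m+1) (alphaVal Q A (m+1) u) (e Q A (u (Fin.last m))))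

variable {Q A}

lemma alphaMap_single (n : ℕ) (x : Fin n → Q) (a : A) :
    alphaMap Q A n (Finsupp.single x a) = a • alphaVal Q A n x := by
  simp [alphaMap, Finsupp.lsum_single, LinearMap.toSpanSingleton_apply]

lemma concat_single (m : ℕ) (u : Fin m → Q) (v : Fin 1 → Q) (a b : A) :
    concatLast Q A m (Finsupp.single u a) (Finsupp.single v b) =
      Finsupp.single (Fin.snoc u (v 0)) (a * b) := by
  simp [concatLast, Finsupp.lsum_single, LinearMap.toSpanSingleton_apply,
    Finsupp.lmapDomain_apply, Finsupp.mapDomain_single, Finsupp.smul_single, mul_comm]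

lemma concat_single_e (m : ℕ) (u : Fin m → Q) (z : Q) (a : A) :
    concatLast Q A m (Finsupp.single u a) (e Q A z) = Finsupp.single (Fin.snoc u z) a := by
  simpa [e] using concat_single m u (fun _ : Fin 1 => z) a 1

lemma actMap_single (z : Q) (n : ℕ) (x : Fin n → Q) (a : A) :
    actMap Q A z n (Finsupp.single x a) = Finsupp.single (fun j => tri (x j) z) a := by
  simp [actMap, Finsupp.lmapDomain_apply, Finsupp.mapDomain_single]

lemma actMap_e (z y : Q) : actMap Q A z 1 (e Q A y) = e Q A (tri y z) := by
  simp [e, actMap_single]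

lemma gamMap_single (m : ℕ) (u : Fin (m+1) → Q) (a : A) :
    gamMap Q A m (Finsupp.single u a) =
      a • concatLast Q A (m+1) (alphaVal Q A (m+1) u) (e Q A (u (Fin.last m))) := by
  simp [gamMap, Finsupp.lsum_single, LinearMap.toSpanSingleton_apply]

lemma alphaVal_succ (m : ℕ) (x : Fin (m+2) → Q) :
    alphaVal Q A (m+2) x =
      concatLast Q A (m+1) (alphaVal Q A (m+1) fun i => x i.castSucc)
        (e Q A (x (Fin.last (m+1))) - e Q A (x ((Fin.last m).castSucc))) := by
  rfl

lemma rackBoundary_succ_single (m : ℕ) (x : Fin (m+2) → Q) (a : A) :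
    rackBoundary Q A (m+1) (Finsupp.single x a) =
      a • ∑ i : Fin (m + 2), ((-1 : A) ^ (m + 1 - (i : ℕ))) •
        (Finsupp.single (dTop i x) (1 : A) - Finsupp.single (dBot i x) (1 : A)) := by
  simp [rackBoundary, Finsupp.lsum_single, LinearMap.toSpanSingleton_apply]

lemma dTop_snoc_castSucc {m : ℕ} (j : Fin (m+2)) (w : Fin (m+2) → Q) (y : Q) :
    dTop (j.castSucc) (Fin.snoc w y) = Fin.snoc (dTop j w) y := by
  funext k
  induction k using Fin.lastCases with
  | last =>
    have h1 : (j.castSucc).succAbove (Fin.last (m+1)) = Fin.last (m+2) := by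
      rw [Fin.succAbove_castSucc_of_le j _ (Fin.le_last j), Fin.succ_last]
    simp only [dTop, h1, Fin.snoc_last]
    rw [if_neg (by have := j.isLt; simp only [Fin.val_last, Fin.coe_castSucc]; omega)]
  | cast k =>
    have h1 : (j.castSucc).succAbove (k.castSucc) = (j.succAbove k).castSucc :=
      Fin.castSucc_succAbove_castSucc
    simp only [dTop, h1, Fin.snoc_castSucc, Fin.coe_castSucc]

lemma dBot_snoc_castSucc {m : ℕ} (j : Fin (m+2)) (w : Fin (m+2) → Q) (y : Q) :
    dBot (j.castSucc) (Fin.snoc w y) = Fin.snoc (dBot j w) y := by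
  funext k
  induction k using Fin.lastCases with
  | last =>
    have h1 : (j.castSucc).succAbove (Fin.last (m+1)) = Fin.last (m+2) := by
      rw [Fin.succAbove_castSucc_of_le j _ (Fin.le_last j), Fin.succ_last]
    simp only [dBot, h1, Fin.snoc_last]
  | cast k =>
    have h1 : (j.castSucc).succAbove (k.castSucc) = (j.succAbove k).castSucc :=
      Fin.castSucc_succAbove_castSucc
    simp only [dBot, h1, Fin.snoc_castSucc]

lemma dTop_snoc_last {m : ℕ} (w : Fin (m+2) → Q) (y : Q) :
    dTop (Fin.last (m+2)) (Fin.snoc w y) = fun j => tri (w j) y := by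
  funext k
  have h1 : (Fin.last (m+2)).succAbove k = k.castSucc := Fin.succAbove_last_apply k
  simp only [dTop, h1]
  rw [if_pos (by have := k.isLt; simp only [Fin.val_last, Fin.coe_castSucc]; omega)]
  simp

lemma dBot_snoc_last {m : ℕ} (w : Fin (m+2) → Q) (y : Q) :
    dBot (Fin.last (m+2)) (Fin.snoc w y) = w := by
  funext k
  have h1 : (Fin.last (m+2)).succAbove k = k.castSucc := Fin.succAbove_last_apply k
  simp only [dBot, h1, Fin.snoc_castSucc]

lemma snoc_init_last {m : ℕ} (x : Fin (m+1) → Q) :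
    Fin.snoc (fun i => x i.castSucc) (x (Fin.last m)) = x := by
  funext i
  induction i using Fin.lastCases with
  | last => simp
  | cast i => simp

lemma snoc_tri {m : ℕ} (w : Fin m → Q) (c z : Q) :
    (fun j => tri ((Fin.snoc w c : Fin (m+1) → Q) j) z) =
      Fin.snoc (fun j => tri (w j) z) (tri c z) := by
  funext i
  induction i using Fin.lastCases with
  | last => simp
  | cast i => simp

lemma boundary_concat (m : ℕ) (y : Q) (u : RackChains Q A (m+2)) :
    rackBoundary Q A (m+2) (concatLast Q A (m+2) u (e Q A y)) =
      -(concatLast Q A (m+1) (rackBoundary Q A (m+1) u) (e Q A y)) +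
        actMap Q A y (m+2) u - u := by
  induction u using Finsupp.induction_linear with
  | zero => simp
  | add f g hf hg =>
    simp only [map_add, LinearMap.add_apply] at *
    rw [hf, hg]; abel
  | single w b =>
    have key : rackBoundary Q A (m+2) (Finsupp.single (Fin.snoc w y) (1:A)) =
        -(concatLast Q A (m+1) (rackBoundary Q A (m+1) (Finsupp.single w (1:A))) (e Q A y)) +
          Finsupp.single (fun j => tri (w j) y) (1:A) - Finsupp.single w (1:A) := by
      rw [rackBoundary_succ_single, rackBoundary_succ_single, one_smul, one_smul,
        map_sum, LinearMap.sum_apply, Fin.sum_univ_castSucc]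
      have hlast : ((-1:A) ^ (m + 2 - ((Fin.last (m+2) : Fin (m+3)) : ℕ))) •
          (Finsupp.single (dTop (Fin.last (m+2)) (Fin.snoc w y)) (1:A) -
            Finsupp.single (dBot (Fin.last (m+2)) (Fin.snoc w y)) (1:A)) =
          Finsupp.single (fun j => tri (w j) y) (1:A) - Finsupp.single w 1 := by
        rw [dTop_snoc_last, dBot_snoc_last, Fin.val_last, Nat.sub_self, pow_zero, one_smul]
      rw [hlast]
      have hsum : ∑ j : Fin (m+2), ((-1:A) ^ (m + 2 - ((j.castSucc : Fin (m+3)) : ℕ))) •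
            (Finsupp.single (dTop j.castSucc (Fin.snoc w y)) (1:A) -
              Finsupp.single (dBot j.castSucc (Fin.snoc w y)) (1:A)) =
          -∑ j : Fin (m+2),
            concatLast Q A (m+1) (((-1:A) ^ (m + 1 - (j : ℕ))) •
              (Finsupp.single (dTop j w) (1:A) - Finsupp.single (dBot j w) (1:A)))
              (e Q A y) := by
        rw [← Finset.sum_neg_distrib]
        refine Finset.sum_congr rfl fun j _ => ?_
        rw [map_smul, LinearMap.smul_apply, map_sub, LinearMap.sub_apply,
          concat_single_e, concat_single_e, dTop_snoc_castSucc, dBot_snoc_castSucc,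
          Fin.coe_castSucc]
        have h2 : m + 2 - (j:ℕ) = (m + 1 - (j:ℕ)) + 1 := by have := j.isLt; omega
        rw [h2, pow_succ, mul_neg_one, neg_smul]
      rw [hsum]
      abel
    have hy : (Finsupp.single (Fin.snoc w y) b : RackChains Q A (m+3)) =
        b • Finsupp.single (Fin.snoc w y) 1 := (Finsupp.smul_single_one _ b).symm
    have hw : (Finsupp.single w b : RackChains Q A (m+2)) =
        b • Finsupp.single w 1 := (Finsupp.smul_single_one _ b).symm
    have htw : (Finsupp.single (fun j => tri (w j) y) b : RackChains Q A (m+2)) =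
        b • Finsupp.single (fun j => tri (w j) y) 1 := (Finsupp.smul_single_one _ b).symm
    rw [concat_single_e, hy, map_smul, key, actMap_single, hw, htw, map_smul, map_smul,
      LinearMap.smul_apply]
    module

lemma actMap_concat (m : ℕ) (z : Q) (u : RackChains Q A m) (v : RackChains Q A 1) :
    actMap Q A z (m+1) (concatLast Q A m u v) =
      concatLast Q A m (actMap Q A z m u) (actMap Q A z 1 v) := by
  induction u using Finsupp.induction_linear with
  | zero => simp
  | add f g hf hg => simp only [map_add, LinearMap.add_apply, hf, hg]
  | single w a =>
    induction v using Finsupp.induction_linear with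
    | zero => simp
    | add f g hf hg => simp only [map_add, hf, hg]
    | single c b =>
      rw [concat_single, actMap_single, actMap_single, actMap_single, concat_single]
      rw [snoc_tri]

lemma alphaVal_act : ∀ (n : ℕ) (x : Fin n → Q) (z : Q),
    alphaVal Q A n (fun j => tri (x j) z) = actMap Q A z n (alphaVal Q A n x)
  | 0, x, z => by
    rw [show alphaVal Q A 0 (fun j => tri (x j) z) = Finsupp.single _ 1 from rfl,
      show alphaVal Q A 0 x = Finsupp.single x 1 from rfl, actMap_single]
  | 1, x, z => by
    rw [show alphaVal Q A 1 (fun j => tri (x j) z) = Finsupp.single _ 1 from rfl,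
      show alphaVal Q A 1 x = Finsupp.single x 1 from rfl, actMap_single]
  | (m+2), x, z => by
    have IH : alphaVal Q A (m+1) (fun i => tri (x i.castSucc) z) =
        actMap Q A z (m+1) (alphaVal Q A (m+1) fun i => x i.castSucc) :=
      alphaVal_act (m+1) (fun i => x i.castSucc) z
    simp only [alphaVal_succ]
    rw [actMap_concat, (actMap Q A z 1).map_sub, actMap_e, actMap_e, IH]

lemma alphaMap_concat (m : ℕ) (z : Q) (u : RackChains Q A (m+1)) :
    alphaMap Q A (m+2) (concatLast Q A (m+1) u (e Q A z)) =
      concatLast Q A (m+1) (alphaMap Q A (m+1) u) (e Q A z) - gamMap Q A m u := by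
  induction u using Finsupp.induction_linear with
  | zero => simp
  | add f g hf hg => simp only [map_add, LinearMap.add_apply, hf, hg]; abel
  | single w a =>
    rw [concat_single_e, alphaMap_single, alphaMap_single, gamMap_single, alphaVal_succ]
    have h1 : (fun i : Fin (m+1) => (Fin.snoc w z : Fin (m+2) → Q) i.castSucc) = w := by
      funext i; simp
    have h2 : (Fin.snoc w z : Fin (m+2) → Q) (Fin.last (m+1)) = z := by simp
    have h3 : (Fin.snoc w z : Fin (m+2) → Q) ((Fin.last m).castSucc) = w (Fin.last m) := by
      simp
    rw [h1, h2, h3, map_sub, smul_sub, map_smul, LinearMap.smul_apply]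

lemma gamMap_concat (m : ℕ) (z : Q) (u : RackChains Q A (m+1)) :
    gamMap Q A (m+1) (concatLast Q A (m+1) u (e Q A z)) =
      concatLast Q A (m+2)
        (alphaMap Q A (m+2) (concatLast Q A (m+1) u (e Q A z))) (e Q A z) := by
  induction u using Finsupp.induction_linear with
  | zero => simp
  | add f g hf hg => simp only [map_add, LinearMap.add_apply, hf, hg]
  | single w a =>
    rw [concat_single_e, gamMap_single, alphaMap_single, map_smul, LinearMap.smul_apply]
    have hz : (Fin.snoc w z : Fin (m+2) → Q) (Fin.last (m+1)) = z := by simp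
    rw [hz]

lemma alphaMap_one : alphaMap Q A 1 = LinearMap.id := by
  apply Finsupp.lhom_ext
  intro x b
  rw [alphaMap_single, show alphaVal Q A 1 x = Finsupp.single x 1 from rfl,
    Finsupp.smul_single_one, LinearMap.id_apply]

lemma bd1_single (x : Fin 2 → Q) (a : A) :
    rackBoundary Q A 1 (Finsupp.single x a) =
      Finsupp.single (fun _ : Fin 1 => tri (x 0) (x 1)) a -
        Finsupp.single (fun _ : Fin 1 => x 0) a := by
  rw [rackBoundary_succ_single, Fin.sum_univ_two]
  have h0 : dTop (0 : Fin 2) x = dBot (0 : Fin 2) x := by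
    funext j
    obtain rfl := Subsingleton.elim j 0
    have hc : ¬ (((0 : Fin 2).succAbove 0 : Fin 2) : ℕ) < ((0 : Fin 2) : ℕ) := by decide
    simp [dTop, dBot, hc]
  have h1 : dTop (1 : Fin 2) x = fun _ : Fin 1 => tri (x 0) (x 1) := by
    funext j
    obtain rfl := Subsingleton.elim j 0
    have hs : (1 : Fin 2).succAbove 0 = 0 := by decide
    have hc : (((1 : Fin 2).succAbove 0 : Fin 2) : ℕ) < ((1 : Fin 2) : ℕ) := by decide
    simp [dTop, hc, hs]
  have h2 : dBot (1 : Fin 2) x = fun _ : Fin 1 => x 0 := by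
    funext j
    obtain rfl := Subsingleton.elim j 0
    have hs : (1 : Fin 2).succAbove 0 = 0 := by decide
    simp [dBot, hs]
  rw [h0, h1, h2, sub_self, smul_zero]
  simp [smul_sub, Finsupp.smul_single]

lemma alphaVal_two (x : Fin 2 → Q) :
    alphaVal Q A 2 x =
      Finsupp.single x 1 - Finsupp.single (fun _ : Fin 2 => x 0) 1 := by
  rw [alphaVal_succ,
    show alphaVal Q A 1 (fun i => x i.castSucc) =
      Finsupp.single (fun i : Fin 1 => x i.castSucc) 1 from rfl,
    map_sub, concat_single_e, concat_single_e]
  congr 2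
  · funext i
    induction i using Fin.lastCases with
    | last => rfl
    | cast i => simp
  · funext i
    induction i using Fin.lastCases with
    | last => exact Fin.snoc_last _ _
    | cast i =>
      obtain rfl := Subsingleton.elim i 0
      simp [Fin.snoc]

lemma chainmap_zero :
    (rackBoundary Q A 1).comp (alphaMap Q A 2) =
      (alphaMap Q A 1).comp (rackBoundary Q A 1) := by
  apply Finsupp.lhom_ext
  intro x b
  rw [LinearMap.comp_apply, LinearMap.comp_apply, alphaMap_single, map_smul, alphaMap_one,
    LinearMap.id_apply, alphaVal_two, map_sub, bd1_single, bd1_single, bd1_single]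
  rw [show tri (x 0) (x 0) = x 0 from PaperQuandle.tri_self (x 0), sub_self, sub_zero,
    smul_sub, Finsupp.smul_single_one, Finsupp.smul_single_one]

lemma star_zero (x : Fin 2 → Q) :
    gamMap Q A 0 (rackBoundary Q A 1 (Finsupp.single x 1)) +
      actMap Q A (x (Fin.last 1)) 2 (alphaVal Q A 2 x) =
    concatLast Q A 1 (alphaMap Q A 1 (rackBoundary Q A 1 (Finsupp.single x 1)))
      (e Q A (x (Fin.last 1))) + alphaVal Q A 2 x := by
  have hb : x (Fin.last 1) = x 1 := rfl
  rw [hb, bd1_single, alphaVal_two, alphaMap_one, LinearMap.id_coe, id_eq]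
  rw [map_sub, map_sub, gamMap_single, gamMap_single, one_smul, one_smul,
    actMap_single, actMap_single, map_sub, LinearMap.sub_apply]
  rw [show alphaVal Q A 1 (fun _ : Fin 1 => tri (x 0) (x 1)) =
      Finsupp.single (fun _ : Fin 1 => tri (x 0) (x 1)) 1 from rfl,
    show alphaVal Q A 1 (fun _ : Fin 1 => x 0) =
      Finsupp.single (fun _ : Fin 1 => x 0) 1 from rfl]
  rw [concat_single_e, concat_single_e, concat_single_e, concat_single_e]
  have T1 : Fin.snoc (fun _ : Fin 1 => tri (x 0) (x 1)) (tri (x 0) (x 1)) =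
      fun _ : Fin 2 => tri (x 0) (x 1) := by
    funext i
    induction i using Fin.lastCases with
    | last => exact Fin.snoc_last _ _
    | cast i => simp
  have T2 : Fin.snoc (fun _ : Fin 1 => x 0) (x 0) = fun _ : Fin 2 => x 0 := by
    funext i
    induction i using Fin.lastCases with
    | last => exact Fin.snoc_last _ _
    | cast i => simp
  have T3 : (fun j : Fin 2 => tri (x j) (x 1)) =
      Fin.snoc (fun _ : Fin 1 => tri (x 0) (x 1)) (x 1) := by
    funext i
    induction i using Fin.lastCases with
    | last => simp [show x (Fin.last 1) = x 1 from rfl, PaperQuandle.tri_self]; exact (Fin.snoc_last (α := fun _ => Q) (x 1) (fun _ : Fin 1 => tri (x 0) (x 1))).symm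
    | cast i =>
      obtain rfl := Subsingleton.elim i 0
      simp [Fin.snoc]
  have T5 : Fin.snoc (fun _ : Fin 1 => x 0) (x 1) = x := by
    funext i
    induction i using Fin.lastCases with
    | last => simp [show x (Fin.last 1) = x 1 from rfl]; exact Fin.snoc_last _ _
    | cast i =>
      obtain rfl := Subsingleton.elim i 0
      simp [Fin.snoc]
  rw [T1, T2, T3, T5]
  abel

section Step
variable (m : ℕ) (x : Fin (m+3) → Q)

lemma single_x_eq :
    Finsupp.single x (1:A) =
      concatLast Q A (m+2) (Finsupp.single (fun i => x i.castSucc) 1)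
        (e Q A (x (Fin.last (m+2)))) := by
  rw [concat_single_e, snoc_init_last]

lemma bdx_eq :
    rackBoundary Q A (m+2) (Finsupp.single x (1:A)) =
      -(concatLast Q A (m+1)
          (rackBoundary Q A (m+1) (Finsupp.single (fun i => x i.castSucc) 1))
          (e Q A (x (Fin.last (m+2))))) +
        Finsupp.single (fun j => tri (x j.castSucc) (x (Fin.last (m+2)))) 1 -
        Finsupp.single (fun i => x i.castSucc) 1 := by
  rw [single_x_eq m x, boundary_concat, actMap_single]

lemma chainmap_core
    (IH1 : (rackBoundary Q A (m+1)).comp (alphaMap Q A (m+2)) =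
      (alphaMap Q A (m+1)).comp (rackBoundary Q A (m+1)))
    (IH2 : ∀ w : Fin (m+2) → Q,
      gamMap Q A m (rackBoundary Q A (m+1) (Finsupp.single w 1)) +
        actMap Q A (w (Fin.last (m+1))) (m+2) (alphaVal Q A (m+2) w) =
      concatLast Q A (m+1)
        (alphaMap Q A (m+1) (rackBoundary Q A (m+1) (Finsupp.single w 1)))
        (e Q A (w (Fin.last (m+1)))) + alphaVal Q A (m+2) w) :
    rackBoundary Q A (m+2) (alphaMap Q A (m+3) (Finsupp.single x (1:A))) =
      alphaMap Q A (m+2) (rackBoundary Q A (m+2) (Finsupp.single x (1:A))) := by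
  have halw : alphaVal Q A (m+2) (fun i => x i.castSucc) =
      alphaMap Q A (m+2) (Finsupp.single (fun i => x i.castSucc) 1) := by
    rw [alphaMap_single, one_smul]
  have hbdalw : rackBoundary Q A (m+1)
        (alphaMap Q A (m+2) (Finsupp.single (fun i => x i.castSucc) 1)) =
      alphaMap Q A (m+1)
        (rackBoundary Q A (m+1) (Finsupp.single (fun i => x i.castSucc) 1)) := by
    have := LinearMap.congr_fun IH1 (Finsupp.single (fun i => x i.castSucc) 1)
    simpa using this
  have hL : rackBoundary Q A (m+2) (alphaMap Q A (m+3) (Finsupp.single x (1:A))) =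
      (-(concatLast Q A (m+1)
          (alphaMap Q A (m+1)
            (rackBoundary Q A (m+1) (Finsupp.single (fun i => x i.castSucc) 1)))
          (e Q A (x (Fin.last (m+2))))) +
        actMap Q A (x (Fin.last (m+2))) (m+2) (alphaVal Q A (m+2) (fun i => x i.castSucc)) -
        alphaVal Q A (m+2) (fun i => x i.castSucc)) -
      (-(concatLast Q A (m+1)
          (alphaMap Q A (m+1)
            (rackBoundary Q A (m+1) (Finsupp.single (fun i => x i.castSucc) 1)))
          (e Q A (x ((Fin.last (m+1)).castSucc)))) +
        actMap Q A (x ((Fin.last (m+1)).castSucc)) (m+2)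
          (alphaVal Q A (m+2) (fun i => x i.castSucc)) -
        alphaVal Q A (m+2) (fun i => x i.castSucc)) := by
    rw [alphaMap_single, one_smul, alphaVal_succ, map_sub, map_sub, boundary_concat,
      boundary_concat, halw, hbdalw]
  have hR : alphaMap Q A (m+2) (rackBoundary Q A (m+2) (Finsupp.single x (1:A))) =
      -(concatLast Q A (m+1)
          (alphaMap Q A (m+1)
            (rackBoundary Q A (m+1) (Finsupp.single (fun i => x i.castSucc) 1)))
          (e Q A (x (Fin.last (m+2)))) -
        gamMap Q A m (rackBoundary Q A (m+1) (Finsupp.single (fun i => x i.castSucc) 1))) +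
        actMap Q A (x (Fin.last (m+2))) (m+2) (alphaVal Q A (m+2) (fun i => x i.castSucc)) -
        alphaVal Q A (m+2) (fun i => x i.castSucc) := by
    rw [bdx_eq m x, map_sub, map_add, map_neg, alphaMap_concat, alphaMap_single, one_smul,
      alphaMap_single, one_smul, alphaVal_act]
  rw [hL, hR]
  have hIH2 : concatLast Q A (m+1)
        (alphaMap Q A (m+1)
          (rackBoundary Q A (m+1) (Finsupp.single (fun i => x i.castSucc) 1)))
        (e Q A (x ((Fin.last (m+1)).castSucc))) =
      gamMap Q A m (rackBoundary Q A (m+1) (Finsupp.single (fun i => x i.castSucc) 1)) +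
        actMap Q A (x ((Fin.last (m+1)).castSucc)) (m+2)
          (alphaVal Q A (m+2) (fun i => x i.castSucc)) -
        alphaVal Q A (m+2) (fun i => x i.castSucc) := by
    rw [eq_sub_iff_add_eq]
    exact (IH2 (fun i => x i.castSucc)).symm
  rw [hIH2]
  abel

lemma alpha_bdx :
    alphaMap Q A (m+2) (rackBoundary Q A (m+2) (Finsupp.single x (1:A))) =
      -(concatLast Q A (m+1)
          (alphaMap Q A (m+1)
            (rackBoundary Q A (m+1) (Finsupp.single (fun i => x i.castSucc) 1)))
          (e Q A (x (Fin.last (m+2)))) -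
        gamMap Q A m (rackBoundary Q A (m+1) (Finsupp.single (fun i => x i.castSucc) 1))) +
        actMap Q A (x (Fin.last (m+2))) (m+2) (alphaVal Q A (m+2) (fun i => x i.castSucc)) -
        alphaVal Q A (m+2) (fun i => x i.castSucc) := by
  rw [bdx_eq m x, map_sub, map_add, map_neg, alphaMap_concat, alphaMap_single, one_smul,
    alphaMap_single, one_smul, alphaVal_act]

lemma star_succ :
    gamMap Q A (m+1) (rackBoundary Q A (m+2) (Finsupp.single x 1)) +
      actMap Q A (x (Fin.last (m+2))) (m+3) (alphaVal Q A (m+3) x) =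
    concatLast Q A (m+2)
      (alphaMap Q A (m+2) (rackBoundary Q A (m+2) (Finsupp.single x 1)))
      (e Q A (x (Fin.last (m+2)))) + alphaVal Q A (m+3) x := by
  have h1 : gamMap Q A (m+1) (rackBoundary Q A (m+2) (Finsupp.single x 1)) =
      -(concatLast Q A (m+2)
          (concatLast Q A (m+1)
            (alphaMap Q A (m+1)
              (rackBoundary Q A (m+1) (Finsupp.single (fun i => x i.castSucc) 1)))
            (e Q A (x (Fin.last (m+2)))))
          (e Q A (x (Fin.last (m+2)))) -
        concatLast Q A (m+2)
          (gamMap Q A m (rackBoundary Q A (m+1) (Finsupp.single (fun i => x i.castSucc) 1)))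
          (e Q A (x (Fin.last (m+2))))) +
        concatLast Q A (m+2)
          (actMap Q A (x (Fin.last (m+2))) (m+2)
            (alphaVal Q A (m+2) (fun i => x i.castSucc)))
          (e Q A (tri (x ((Fin.last (m+1)).castSucc)) (x (Fin.last (m+2))))) -
        concatLast Q A (m+2) (alphaVal Q A (m+2) (fun i => x i.castSucc))
          (e Q A (x ((Fin.last (m+1)).castSucc))) := by
    rw [bdx_eq m x, map_sub, map_add, map_neg, gamMap_concat, alphaMap_concat,
      map_sub, LinearMap.sub_apply, gamMap_single, one_smul, gamMap_single, one_smul,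
      alphaVal_act]
  have h2 : actMap Q A (x (Fin.last (m+2))) (m+3) (alphaVal Q A (m+3) x) =
      concatLast Q A (m+2)
        (actMap Q A (x (Fin.last (m+2))) (m+2) (alphaVal Q A (m+2) (fun i => x i.castSucc)))
        (e Q A (x (Fin.last (m+2)))) -
      concatLast Q A (m+2)
        (actMap Q A (x (Fin.last (m+2))) (m+2) (alphaVal Q A (m+2) (fun i => x i.castSucc)))
        (e Q A (tri (x ((Fin.last (m+1)).castSucc)) (x (Fin.last (m+2))))) := by
    rw [alphaVal_succ, actMap_concat,
      (actMap Q A (x (Fin.last (m+2))) 1).map_sub, actMap_e, actMap_e,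
      PaperQuandle.tri_self, map_sub]
  have h4 : concatLast Q A (m+2)
        (alphaMap Q A (m+2) (rackBoundary Q A (m+2) (Finsupp.single x 1)))
        (e Q A (x (Fin.last (m+2)))) =
      -(concatLast Q A (m+2)
          (concatLast Q A (m+1)
            (alphaMap Q A (m+1)
              (rackBoundary Q A (m+1) (Finsupp.single (fun i => x i.castSucc) 1)))
            (e Q A (x (Fin.last (m+2)))))
          (e Q A (x (Fin.last (m+2)))) -
        concatLast Q A (m+2)
          (gamMap Q A m (rackBoundary Q A (m+1) (Finsupp.single (fun i => x i.castSucc) 1)))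
          (e Q A (x (Fin.last (m+2))))) +
        concatLast Q A (m+2)
          (actMap Q A (x (Fin.last (m+2))) (m+2)
            (alphaVal Q A (m+2) (fun i => x i.castSucc)))
          (e Q A (x (Fin.last (m+2)))) -
        concatLast Q A (m+2) (alphaVal Q A (m+2) (fun i => x i.castSucc))
          (e Q A (x (Fin.last (m+2)))) := by
    rw [alpha_bdx m x]
    simp only [map_sub, map_add, map_neg, LinearMap.sub_apply, LinearMap.add_apply,
      LinearMap.neg_apply]
  have h5 : alphaVal Q A (m+3) x =
      concatLast Q A (m+2) (alphaVal Q A (m+2) (fun i => x i.castSucc))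
        (e Q A (x (Fin.last (m+2)))) -
      concatLast Q A (m+2) (alphaVal Q A (m+2) (fun i => x i.castSucc))
        (e Q A (x ((Fin.last (m+1)).castSucc))) := by
    rw [alphaVal_succ, map_sub]
  rw [h1, h2, h4, h5]
  abel

end Step

lemma single_degen_mem {n : ℕ} (x : Fin n → Q) (i : ℕ) (h : i+1 < n)
    (hx : x ⟨i, by omega⟩ = x ⟨i+1, h⟩) : Finsupp.single x (1:A) ∈ Degen Q A n :=
  Submodule.subset_span ⟨x, ⟨i, h, hx⟩, rfl⟩

lemma alphaVal_degen : ∀ (n : ℕ) (x : Fin n → Q),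
    (∃ i : ℕ, ∃ h : i + 1 < n, x ⟨i, by omega⟩ = x ⟨i+1, h⟩) → alphaVal Q A n x = 0
  | 0, _, hmem => absurd hmem (by rintro ⟨i, h, -⟩; omega)
  | 1, _, hmem => absurd hmem (by rintro ⟨i, h, -⟩; omega)
  | (m+2), x, hmem => by
    obtain ⟨i, h, hx⟩ := hmem
    rcases Nat.lt_or_ge (i+1) (m+1) with h1 | h1
    · have hz : alphaVal Q A (m+1) (fun j => x j.castSucc) = 0 :=
        alphaVal_degen (m+1) _ ⟨i, h1, hx⟩
      rw [alphaVal_succ, hz, map_zero, LinearMap.zero_apply]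
    · rw [alphaVal_succ]
      have hz : x (Fin.last (m+1)) = x ((Fin.last m).castSucc) := by
        have e1 : Fin.last (m+1) = (⟨i+1, h⟩ : Fin (m+2)) := by
          apply Fin.ext
          simp only [Fin.val_last]
          omega
        have e2 : (Fin.last m).castSucc = (⟨i, by omega⟩ : Fin (m+2)) := by
          apply Fin.ext
          simp only [Fin.coe_castSucc, Fin.val_last]
          omega
        rw [e1, e2]
        exact hx.symm
      rw [hz, sub_self, map_zero]

lemma concat_degen (m : ℕ) (v : RackChains Q A 1) {d : RackChains Q A (m+1)}
    (hd : d ∈ Degen Q A (m+1)) :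
    concatLast Q A (m+1) d v ∈ Degen Q A (m+2) := by
  have hle : Degen Q A (m+1) ≤
      (Degen Q A (m+2)).comap ((concatLast Q A (m+1)).flip v) := by
    rw [Degen, Submodule.span_le]
    rintro c ⟨u, ⟨i, hi, hu⟩, rfl⟩
    simp only [SetLike.mem_coe, Submodule.mem_comap, LinearMap.flip_apply]
    induction v using Finsupp.induction_linear with
    | zero => rw [map_zero]; exact Submodule.zero_mem _
    | add f g hf hg => rw [map_add]; exact Submodule.add_mem _ hf hg
    | single y b =>
      rw [concat_single, one_mul, ← Finsupp.smul_single_one]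
      refine Submodule.smul_mem _ b (single_degen_mem _ i (by omega) ?_)
      have e1 : (⟨i, by omega⟩ : Fin (m+2)) = ((⟨i, by omega⟩ : Fin (m+1)).castSucc) := rfl
      have e2 : (⟨i+1, by omega⟩ : Fin (m+2)) = ((⟨i+1, hi⟩ : Fin (m+1)).castSucc) := rfl
      rw [e1, e2, Fin.snoc_castSucc, Fin.snoc_castSucc]
      exact hu
  have := hle hd
  simpa only [Submodule.mem_comap, LinearMap.flip_apply] using this

lemma alphaVal_sub_mem : ∀ (m : ℕ) (x : Fin (m+1) → Q),
    alphaVal Q A (m+1) x - Finsupp.single x 1 ∈ Degen Q A (m+1)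
  | 0, x => by
    rw [show alphaVal Q A 1 x = Finsupp.single x 1 from rfl, sub_self]
    exact Submodule.zero_mem _
  | (m+1), x => by
    have hw := alphaVal_sub_mem m (fun i => x i.castSucc)
    rw [alphaVal_succ]
    have hdecomp : concatLast Q A (m+1) (alphaVal Q A (m+1) (fun i => x i.castSucc))
          (e Q A (x (Fin.last (m+1))) - e Q A (x ((Fin.last m).castSucc))) -
          Finsupp.single x 1 =
        concatLast Q A (m+1)
          (alphaVal Q A (m+1) (fun i => x i.castSucc) -
            Finsupp.single (fun i => x i.castSucc) 1)
          (e Q A (x (Fin.last (m+1))) - e Q A (x ((Fin.last m).castSucc))) -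
          Finsupp.single (Fin.snoc (fun i => x i.castSucc) (x ((Fin.last m).castSucc))) 1 := by
      simp only [map_sub, LinearMap.sub_apply]
      rw [concat_single_e, concat_single_e, snoc_init_last]
      abel
    rw [hdecomp]
    refine Submodule.sub_mem _ (concat_degen m _ hw) ?_
    refine single_degen_mem _ m (by omega) ?_
    have h1 : (Fin.snoc (fun i => x i.castSucc) (x ((Fin.last m).castSucc)) :
        Fin (m+2) → Q) ⟨m, by omega⟩ = x ((Fin.last m).castSucc) := by
      rw [show (⟨m, by omega⟩ : Fin (m+2)) = (Fin.last m).castSucc from rfl,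
        Fin.snoc_castSucc]
    have h2 : (Fin.snoc (fun i => x i.castSucc) (x ((Fin.last m).castSucc)) :
        Fin (m+2) → Q) ⟨m+1, by omega⟩ = x ((Fin.last m).castSucc) := by
      rw [show (⟨m+1, by omega⟩ : Fin (m+2)) = Fin.last (m+1) from rfl, Fin.snoc_last]
    exact h1.trans h2.symm

lemma degen_le_ker (n : ℕ) : Degen Q A n ≤ LinearMap.ker (alphaMap Q A n) := by
  rw [Degen, Submodule.span_le]
  rintro c ⟨x, hx, rfl⟩
  simp only [SetLike.mem_coe, LinearMap.mem_ker]
  rw [alphaMap_single, one_smul]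
  exact alphaVal_degen n x hx

lemma alpha_sub_mem (m : ℕ) (v : RackChains Q A (m+1)) :
    alphaMap Q A (m+1) v - v ∈ Degen Q A (m+1) := by
  induction v using Finsupp.induction_linear with
  | zero => rw [map_zero, sub_zero]; exact Submodule.zero_mem _
  | add f g hf hg =>
    rw [map_add]
    have : alphaMap Q A (m+1) f + alphaMap Q A (m+1) g - (f + g) =
        (alphaMap Q A (m+1) f - f) + (alphaMap Q A (m+1) g - g) := by abel
    rw [this]
    exact Submodule.add_mem _ hf hg
  | single x b =>
    rw [alphaMap_single, ← Finsupp.smul_single_one, ← smul_sub]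
    exact Submodule.smul_mem _ b (alphaVal_sub_mem m x)

end LN

/-- Litherland–Nelson: (i) for every `n ≥ 2` (here `n = m + 2`), `∂_n ∘ α_n = α_{n−1} ∘ ∂_n`,
so `α_*` is a chain map; (ii) for every `n ≥ 1` (here `n = m + 1`), `C^R_n(Q;A)` is the
internal direct sum of `C^D_n(Q;A)` and `α_n(C^R_n(Q;A))`; consequently `C^Q_n(Q;A)` is
isomorphic to `α_n(C^R_n(Q;A))`. -/
theorem litherland_nelson_splitting (Q A : Type*) [PaperQuandle Q] [CommRing A] :
    (∀ m : ℕ, (rackBoundary Q A (m + 1)).comp (alphaMap Q A (m + 2)) =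
        (alphaMap Q A (m + 1)).comp (rackBoundary Q A (m + 1))) ∧
      (∀ m : ℕ, IsCompl (Degen Q A (m + 1)) (LinearMap.range (alphaMap Q A (m + 1))) ∧
        Nonempty ((RackChains Q A (m + 1) ⧸ Degen Q A (m + 1)) ≃ₗ[A]
          ↥(LinearMap.range (alphaMap Q A (m + 1))))) := by
  constructor
  · -- part (i): α is a chain map
    have star : ∀ (m : ℕ) (x : Fin (m+2) → Q),
        LN.gamMap Q A m (rackBoundary Q A (m+1) (Finsupp.single x 1)) +
          LN.actMap Q A (x (Fin.last (m+1))) (m+2) (alphaVal Q A (m+2) x) =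
        concatLast Q A (m+1)
          (alphaMap Q A (m+1) (rackBoundary Q A (m+1) (Finsupp.single x 1)))
          (LN.e Q A (x (Fin.last (m+1)))) + alphaVal Q A (m+2) x := by
      intro m
      match m with
      | 0 => exact LN.star_zero
      | (k+1) => exact fun x => LN.star_succ k x
    intro m
    induction m with
    | zero => exact LN.chainmap_zero
    | succ k ih =>
      apply Finsupp.lhom_ext
      intro x b
      rw [LinearMap.comp_apply, LinearMap.comp_apply, ← Finsupp.smul_single_one x b,
        map_smul, map_smul, map_smul, map_smul]
      congr 1
      exact LN.chainmap_core k x ih (star k)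
  · -- part (ii): splitting
    intro m
    have hker : LinearMap.ker (alphaMap Q A (m+1)) = Degen Q A (m+1) := by
      refine le_antisymm ?_ (LN.degen_le_ker (m+1))
      intro v hv
      rw [LinearMap.mem_ker] at hv
      have h1 := LN.alpha_sub_mem m v
      rw [hv, zero_sub] at h1
      have h2 := Submodule.neg_mem _ h1
      rwa [neg_neg] at h2
    have hidem : ∀ v, alphaMap Q A (m+1) (alphaMap Q A (m+1) v) = alphaMap Q A (m+1) v := by
      intro v
      have h1 : alphaMap Q A (m+1) (alphaMap Q A (m+1) v - v) = 0 := by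
        have := LN.degen_le_ker (m+1) (LN.alpha_sub_mem m v)
        rwa [LinearMap.mem_ker] at this
      rw [map_sub] at h1
      exact sub_eq_zero.mp h1
    refine ⟨⟨?_, ?_⟩, ?_⟩
    · -- disjoint
      rw [Submodule.disjoint_def]
      intro v hvD hvR
      obtain ⟨u, hu⟩ := hvR
      have h0 : alphaMap Q A (m+1) v = 0 := by
        have := LN.degen_le_ker (m+1) hvD
        rwa [LinearMap.mem_ker] at this
      have h1 : v = alphaMap Q A (m+1) v := by
        rw [← hu, hidem]
      exact h1.trans h0
    · -- codisjoint
      rw [codisjoint_iff]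
      rw [Submodule.eq_top_iff']
      intro v
      refine Submodule.mem_sup.mpr ⟨v - alphaMap Q A (m+1) v, ?_, alphaMap Q A (m+1) v,
        ⟨v, rfl⟩, by abel⟩
      have := Submodule.neg_mem _ (LN.alpha_sub_mem m v)
      rwa [neg_sub] at this
    · exact ⟨(Submodule.quotEquivOfEq _ _ hker.symm).trans
        (LinearMap.quotKerEquivRange (alphaMap Q A (m+1)))⟩
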